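/- Let k be a field of characteristic zero, W a k-vector space, and ∇ : W → W a k-linear endomorphism. Extend ∇ to a k-linear endomorphism of the polynomial module W[X] = ⊕_{j≥0} W·X^j by ∇(w·X^j) = ∇(w)·X^j + j·w·X^{j−1}. Then the constant-term map Σ_j a_j X^j ↦ a_0 restricts to a k-linear bijection from the kernel {v ∈ W[X] : ∇(v) = 0} onto the subspace W^{∇-nil} := {a ∈ W : ∇^N a = 0 for some N ≥ 1}, with inverse a ↦ Σ_{j≥0} ((−1)^j/j!)·∇^j(a)·X^j. -/

import Mathlib

/-- Wu, Lemma `lemmagammanilpotent`, ∇-version (abstract form): let `k` be a field of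
characteristic zero, `W` a `k`-vector space, `∇` a `k`-linear endomorphism of `W`, extended
to the polynomial module `W[X] = ⊕_j W·X^j` by `∇(w·X^j) = ∇(w)·X^j + j·w·X^{j-1}`.  Then
the constant-term map is a bijection from `{v ∈ W[X] : ∇v = 0}` onto
`W^{∇-nil} = {a : ∇^N a = 0 for some N}`, with inverse
`a ↦ Σ_j ((-1)^j/j!)·∇^j(a)·X^j`. -/
theorem stmt9 (k : Type*) [Field k] [CharZero k]
    (W : Type*) [AddCommGroup W] [Module k W]
    (nabla : W →ₗ[k] W)
    (D : (ℕ →₀ W) →ₗ[k] (ℕ →₀ W))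
    (hD : ∀ (j : ℕ) (w : W),
      D (Finsupp.single j w) = Finsupp.single j (nabla w) + j • Finsupp.single (j - 1) w) :
    Set.BijOn (fun v : ℕ →₀ W => v 0)
      {v : ℕ →₀ W | D v = 0} {a : W | ∃ N : ℕ, (nabla ^ N) a = 0} ∧
    ∀ (a : W) (N : ℕ), (nabla ^ N) a = 0 →
      D (∑ j ∈ Finset.range N,
          ((-1 : k) ^ j / (j.factorial : k)) • Finsupp.single j ((nabla ^ j) a)) = 0 ∧
      (∑ j ∈ Finset.range N,
          ((-1 : k) ^ j / (j.factorial : k)) • Finsupp.single j ((nabla ^ j) a)) 0 = a := by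
  classical
  have hpow : ∀ (m : ℕ) (x : W), nabla ((nabla ^ m) x) = (nabla ^ (m+1)) x := by
    intro m x; rw [pow_succ', Module.End.mul_apply]
  -- scalar facts
  have hfac : ∀ n : ℕ, ((n.factorial : k)) ≠ 0 :=
    fun n => Nat.cast_ne_zero.2 n.factorial_ne_zero
  have hcs : ∀ n : ℕ, ((n:k)+1) ≠ 0 := fun n => Nat.cast_add_one_ne_zero n
  have hscal2 : ∀ n : ℕ, (-1:k)^(n+1)/(n+1).factorial
      = -(((n:k)+1)⁻¹ * ((-1:k)^n / n.factorial)) := by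
    intro n
    have h2 : (((n+1).factorial : k)) = ((n:k)+1) * n.factorial := by
      push_cast [Nat.factorial_succ]; ring
    rw [h2, pow_succ]
    field_simp
  have hscal : ∀ n : ℕ, ((-1:k)^n / n.factorial)
      + ((n:k)+1) * ((-1:k)^(n+1) / (n+1).factorial) = 0 := by
    intro n
    rw [hscal2 n, mul_neg, ← mul_assoc, mul_inv_cancel₀ (hcs n), one_mul]
    simp
  -- pointwise formula for D
  have hDn : ∀ (v : ℕ →₀ W) (n : ℕ), (D v) n = nabla (v n) + (n+1) • v (n+1) := by
    intro v
    induction v using Finsupp.induction_linear with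
    | zero => intro n; simp
    | add f g hf hg =>
        intro n
        simp only [map_add, Finsupp.add_apply, hf n, hg n, smul_add]
        abel
    | single j w =>
        intro n
        rw [hD]
        simp only [Finsupp.add_apply, Finsupp.smul_apply, Finsupp.single_apply]
        rcases eq_or_ne j n with rfl | hjn
        · rcases eq_or_ne j (j+1) with h | h
          · omega
          · simp only [if_pos rfl, if_neg h, smul_zero, add_right_cancel_iff]
            by_cases hj1 : j - 1 = j
            · have : j = 0 := by omega
              subst this; simp
            · simp [hj1]
        · rcases eq_or_ne j (n+1) with rfl | hj1
          · simp only [if_neg hjn, if_pos rfl, map_zero, Nat.add_sub_cancel, if_pos rfl,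
              zero_add]
          · have hne : j ≠ 0 → j - 1 ≠ n := by omega
            by_cases hj0 : j = 0
            · subst hj0; simp [hjn, hj1]
            · simp [hjn, hj1, hne hj0]
  -- formula for elements of the kernel
  have hker : ∀ v : ℕ →₀ W, D v = 0 → ∀ n : ℕ,
      v n = ((-1:k)^n / n.factorial) • ((nabla ^ n) (v 0)) := by
    intro v hv n
    induction n with
    | zero => simp
    | succ n ih =>
      have h := hDn v n
      rw [hv] at h
      simp only [Finsupp.coe_zero, Pi.zero_apply] at h
      have h2 : ((n+1:ℕ):k) • v (n+1) = - nabla (v n) := by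
        rw [Nat.cast_smul_eq_nsmul]
        exact eq_neg_of_add_eq_zero_right h.symm
      have h3 : v (n+1) = (((n+1:ℕ):k)⁻¹) • (- nabla (v n)) := by
        have := congrArg (fun x => (((n+1:ℕ):k)⁻¹) • x) h2
        simpa [smul_smul, inv_mul_cancel₀ (hcs n)] using this
      rw [h3, ih, map_smul, hpow, smul_neg, smul_smul, ← neg_smul, hscal2 n]
      push_cast
      ring_nf
  -- coefficients of the candidate inverse series
  have hsum : ∀ (N : ℕ) (a : W) (n : ℕ),
      ((∑ j ∈ Finset.range N,
          ((-1 : k) ^ j / (j.factorial : k)) • Finsupp.single j ((nabla ^ j) a)) : ℕ →₀ W) n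
        = if n < N then ((-1:k)^n / n.factorial) • ((nabla ^ n) a) else 0 := by
    intro N a n
    rw [Finset.sum_apply']
    simp only [Finsupp.smul_apply, Finsupp.single_apply]
    by_cases hn : n < N
    · rw [if_pos hn,
        Finset.sum_eq_single n (fun b _ hb => by simp [hb])
          (fun h => absurd (Finset.mem_range.2 hn) h)]
      simp
    · rw [if_neg hn]
      apply Finset.sum_eq_zero
      intro b hb
      have hbn : b ≠ n := by
        simp only [Finset.mem_range] at hb; omega
      simp [hbn]
  -- key part 2
  have key : ∀ (a : W) (N : ℕ), (nabla ^ N) a = 0 →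
      D (∑ j ∈ Finset.range N,
          ((-1 : k) ^ j / (j.factorial : k)) • Finsupp.single j ((nabla ^ j) a)) = 0 ∧
      (∑ j ∈ Finset.range N,
          ((-1 : k) ^ j / (j.factorial : k)) • Finsupp.single j ((nabla ^ j) a)) 0 = a := by
    intro a N hN
    constructor
    · ext n
      rw [hDn]
      simp only [Finsupp.coe_zero, Pi.zero_apply]
      rw [hsum, hsum]
      by_cases h1 : n + 1 < N
      · have h0 : n < N := by omega
        rw [if_pos h0, if_pos h1, map_smul, hpow, ← Nat.cast_smul_eq_nsmul k,
          smul_smul, ← add_smul]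
        have : ((-1:k)^n / n.factorial) + ((n+1:ℕ):k) * ((-1:k)^(n+1) / (n+1).factorial) = 0 := by
          push_cast
          exact hscal n
        rw [this, zero_smul]
      · by_cases h0 : n < N
        · have hNn : N = n + 1 := by omega
          rw [if_pos h0, if_neg h1, map_smul, hpow, smul_zero, add_zero, ← hNn, hN,
            smul_zero]
        · rw [if_neg h0, if_neg h1, map_zero, smul_zero, add_zero]
    · by_cases h0 : 0 < N
      · rw [hsum, if_pos h0]
        simp
      · have hN0 : N = 0 := by omega
        subst hN0
        simp only [pow_zero, Module.End.one_apply] at hN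
        rw [hsum]
        simp [hN]
  refine ⟨⟨?_, ?_, ?_⟩, key⟩
  · -- MapsTo
    intro v hv
    simp only [Set.mem_setOf_eq] at hv ⊢
    obtain ⟨N, hN⟩ : ∃ N, N ∉ v.support := Infinite.exists_notMem_finset v.support
    refine ⟨N, ?_⟩
    have h0 : v N = 0 := Finsupp.notMem_support_iff.1 hN
    have hf := hker v hv N
    rw [h0] at hf
    have hne : ((-1:k)^N / N.factorial) ≠ 0 := by
      apply div_ne_zero
      · exact pow_ne_zero _ (neg_ne_zero.2 one_ne_zero)
      · exact hfac N
    exact (smul_eq_zero.1 hf.symm).resolve_left hne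
  · -- InjOn
    intro v1 h1 v2 h2 h12
    simp only [Set.mem_setOf_eq] at h1 h2
    ext n
    rw [hker v1 h1 n, hker v2 h2 n]
    simp only at h12
    rw [h12]
  · -- SurjOn
    intro a ha
    simp only [Set.mem_setOf_eq] at ha
    obtain ⟨N, hN⟩ := ha
    obtain ⟨hd, hc⟩ := key a N hN
    exact ⟨_, hd, hc⟩
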